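/- Let t₁, t₂, t₃ > 0 and w₁, w₂ > 0, and define ψ : ℝ → ℝ by ψ(x) = t₁·((x − w₁)²)^{1/3} + t₂·((x + w₂)²)^{1/3} + t₃·(x²)^{1/3}. Then the set of local minimum points of ψ is exactly {−w₂, 0, w₁}; in particular ψ is twice differentiable with ψ''(x) < 0 at every x ∉ {−w₂, 0, w₁}. -/

import Mathlib

open Real Filter Set

noncomputable def gg (c : ℝ) : ℝ → ℝ := fun y => ((y - c) ^ 2) ^ ((1:ℝ)/3)

noncomputable def dd (c : ℝ) : ℝ → ℝ := fun y => 2/3 * (y - c) * ((y - c) ^ 2) ^ (-(2:ℝ)/3)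

lemma gg_contDiffAt {n : WithTop ℕ∞} {c x : ℝ} (h : x ≠ c) : ContDiffAt ℝ n (gg c) x := by
  have h1 : ContDiffAt ℝ n (fun y : ℝ => (y - c) ^ 2) x :=
    ((contDiff_id.sub contDiff_const).pow 2).contDiffAt
  exact h1.rpow_const_of_ne (pow_ne_zero 2 (sub_ne_zero.2 h))

lemma gg_continuous (c : ℝ) : Continuous (gg c) :=
  ((continuous_id.sub continuous_const).pow 2).rpow_const (fun _ => Or.inr (by norm_num))

lemma gg_hasDerivAt {c y : ℝ} (h : y ≠ c) : HasDerivAt (gg c) (dd c y) y := by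
  have hne : (y - c) ^ 2 ≠ 0 := pow_ne_zero 2 (sub_ne_zero.2 h)
  have hp : HasDerivAt (fun z : ℝ => (z - c) ^ 2) (2 * (y - c)) y := by
    simpa using ((hasDerivAt_id y).sub_const c).fun_pow 2
  have h2 := hp.rpow_const (p := (1:ℝ)/3) (Or.inl hne)
  have he : (1:ℝ)/3 - 1 = -(2:ℝ)/3 := by norm_num
  rw [he] at h2
  refine h2.congr_deriv ?_
  unfold dd
  ring

lemma dd_hasDerivAt {c y : ℝ} (h : y ≠ c) :
    HasDerivAt (dd c) (-(2:ℝ)/9 * ((y - c) ^ 2) ^ (-(2:ℝ)/3)) y := by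
  have hne : y - c ≠ 0 := sub_ne_zero.2 h
  have hne2 : (y - c) ^ 2 ≠ 0 := pow_ne_zero 2 hne
  have hspos : (0:ℝ) < (y - c) ^ 2 := lt_of_le_of_ne (sq_nonneg _) (Ne.symm hne2)
  have h1 : HasDerivAt (fun z : ℝ => 2/3 * (z - c)) (2/3) y := by
    simpa using ((hasDerivAt_id y).sub_const c).const_mul (2/3 : ℝ)
  have hp : HasDerivAt (fun z : ℝ => (z - c) ^ 2) (2 * (y - c)) y := by
    simpa using ((hasDerivAt_id y).sub_const c).fun_pow 2
  have h2 := hp.rpow_const (p := -(2:ℝ)/3) (Or.inl hne2)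
  have h3 := h1.fun_mul h2
  refine h3.congr_deriv ?_
  have hkey : ((y - c) ^ 2) ^ (-(2:ℝ)/3 - 1) = ((y - c) ^ 2) ^ (-(2:ℝ)/3) / ((y - c) ^ 2) := by
    rw [Real.rpow_sub hspos, Real.rpow_one]
  rw [hkey]
  field_simp
  ring

lemma gg_eq_abs (c y : ℝ) : gg c y = |y - c| ^ ((2:ℝ)/3) := by
  unfold gg
  rw [← sq_abs, ← Real.rpow_natCast (|y - c|) 2, ← Real.rpow_mul (abs_nonneg _)]
  norm_num

lemma isLocalMin_aux (t c : ℝ) (ht : 0 < t) (h : ℝ → ℝ) (hh : ContDiffAt ℝ 1 h c) :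
    IsLocalMin (fun y => t * gg c y + h y) c := by
  obtain ⟨K, s, hs, hK⟩ := hh.exists_lipschitzOnWith
  obtain ⟨ε, hε, hball⟩ := Metric.mem_nhds_iff.1 hs
  have hKpos : (0:ℝ) < (K:ℝ) + 1 := by positivity
  set δ : ℝ := min ε ((t / ((K:ℝ)+1)) ^ 3) with hδdef
  have hδ : 0 < δ := lt_min hε (by positivity)
  have hcmem : c ∈ s := hball (Metric.mem_ball_self hε)
  filter_upwards [Metric.ball_mem_nhds c hδ] with y hy
  have hyd : |y - c| < δ := by simpa [Real.dist_eq] using Metric.mem_ball.1 hy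
  have hymem : y ∈ s := hball (Metric.mem_ball.2 (lt_of_lt_of_le (Metric.mem_ball.1 hy) (min_le_left _ _)))
  have hlip : |h y - h c| ≤ (K:ℝ) * |y - c| := by
    simpa [Real.dist_eq] using hK.dist_le_mul y hymem c hcmem
  set u := |y - c| with hu
  have hu0 : 0 ≤ u := abs_nonneg _
  have hggc : gg c c = 0 := by
    unfold gg; norm_num
  have hkey : (K:ℝ) * u ≤ t * u ^ ((2:ℝ)/3) := by
    rcases eq_or_lt_of_le hu0 with h0 | h0
    · rw [← h0]
      simp
    · have hub : u ≤ (t / ((K:ℝ)+1)) ^ 3 := le_of_lt (lt_of_lt_of_le hyd (min_le_right _ _))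
      have h13 : u ^ ((1:ℝ)/3) ≤ t / ((K:ℝ)+1) := by
        have hmono := Real.rpow_le_rpow hu0 hub (by norm_num : (0:ℝ) ≤ 1/3)
        have hcube : ((t / ((K:ℝ)+1)) ^ 3) ^ ((1:ℝ)/3) = t / ((K:ℝ)+1) := by
          rw [← Real.rpow_natCast (t / ((K:ℝ)+1)) 3, ← Real.rpow_mul (by positivity)]
          norm_num
        rwa [hcube] at hmono
      have husplit : u = u ^ ((1:ℝ)/3) * u ^ ((2:ℝ)/3) := by
        rw [← Real.rpow_add h0]; norm_num
      have h23nn : (0:ℝ) ≤ u ^ ((2:ℝ)/3) := Real.rpow_nonneg hu0 _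
      have hKt : (K:ℝ) * (t / ((K:ℝ)+1)) ≤ t := by
        rw [mul_div_assoc'] at *
        rw [div_le_iff₀ hKpos]
        nlinarith [K.coe_nonneg]
      calc (K:ℝ) * u = ((K:ℝ) * u ^ ((1:ℝ)/3)) * u ^ ((2:ℝ)/3) := by
            rw [mul_assoc, ← husplit]
        _ ≤ ((K:ℝ) * (t / ((K:ℝ)+1))) * u ^ ((2:ℝ)/3) := by
            apply mul_le_mul_of_nonneg_right _ h23nn
            exact mul_le_mul_of_nonneg_left h13 K.coe_nonneg
        _ ≤ t * u ^ ((2:ℝ)/3) := mul_le_mul_of_nonneg_right hKt h23nn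
  have hgy : gg c y = u ^ ((2:ℝ)/3) := gg_eq_abs c y
  simp only [hggc, hgy]
  linarith [neg_abs_le (h y - h c), hlip, hkey]

lemma not_isLocalMin_of_strictConcaveOn {f : ℝ → ℝ} {a b x : ℝ}
    (hs : StrictConcaveOn ℝ (Set.Ioo a b) f) (hx : x ∈ Set.Ioo a b) :
    ¬ IsLocalMin f x := by
  intro hmin
  obtain ⟨ε, hε, hball⟩ := Metric.eventually_nhds_iff.1 hmin
  obtain ⟨hxa, hxb⟩ := hx
  set r : ℝ := min (ε/2) (min ((x - a)/2) ((b - x)/2)) with hr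
  have hr0 : 0 < r := by
    apply lt_min (by linarith) (lt_min (by linarith) (by linarith))
  have hrε : r < ε := lt_of_le_of_lt (min_le_left _ _) (by linarith)
  have hra : r < x - a := lt_of_le_of_lt (le_trans (min_le_right _ _) (min_le_left _ _)) (by linarith)
  have hrb : r < b - x := lt_of_le_of_lt (le_trans (min_le_right _ _) (min_le_right _ _)) (by linarith)
  have hp : x - r ∈ Set.Ioo a b := ⟨by linarith, by linarith⟩
  have hq : x + r ∈ Set.Ioo a b := ⟨by linarith, by linarith⟩
  have h1 : f x ≤ f (x - r) := hball (by rw [Real.dist_eq, abs_of_nonpos (by linarith)]; linarith)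
  have h2 : f x ≤ f (x + r) := hball (by rw [Real.dist_eq, abs_of_nonneg (by linarith)]; linarith)
  have hne : x - r ≠ x + r := by intro hh; linarith [hh]
  have hc := hs.2 hp hq hne (by norm_num : (0:ℝ) < 1/2) (by norm_num : (0:ℝ) < 1/2) (by norm_num)
  simp only [smul_eq_mul] at hc
  have hxx : (1:ℝ)/2 * (x - r) + (1:ℝ)/2 * (x + r) = x := by ring
  rw [hxx] at hc
  linarith

/-- The restricted energy `ψ(x) = t₁((x−w₁)²)^{1/3} + t₂((x+w₂)²)^{1/3} + t₃(x²)^{1/3}`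
has exactly `{−w₂, 0, w₁}` as its set of local minimum points; moreover `ψ` is twice
differentiable with `ψ'' < 0` away from these three points. -/
theorem stmt_11 (t₁ t₂ t₃ w₁ w₂ : ℝ) (ht₁ : 0 < t₁) (ht₂ : 0 < t₂) (ht₃ : 0 < t₃)
    (hw₁ : 0 < w₁) (hw₂ : 0 < w₂) (ψ : ℝ → ℝ)
    (hψ : ψ = fun x : ℝ =>
      t₁ * ((x - w₁) ^ 2) ^ ((1 : ℝ) / 3) + t₂ * ((x + w₂) ^ 2) ^ ((1 : ℝ) / 3) +
        t₃ * (x ^ 2) ^ ((1 : ℝ) / 3)) :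
    (∀ x : ℝ, IsLocalMin ψ x ↔ x = -w₂ ∨ x = 0 ∨ x = w₁) ∧
    (∀ x : ℝ, x ≠ -w₂ → x ≠ 0 → x ≠ w₁ →
      ContDiffAt ℝ 2 ψ x ∧ deriv (deriv ψ) x < 0) := by
  have hrw : ψ = fun y => t₁ * gg w₁ y + t₂ * gg (-w₂) y + t₃ * gg 0 y := by
    rw [hψ]; funext y; simp [gg, sub_neg_eq_add, sub_zero]
  set ψfn : ℝ → ℝ := fun y => t₁ * gg w₁ y + t₂ * gg (-w₂) y + t₃ * gg 0 y with hψfn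
  rw [hrw]
  set Φ : ℝ → ℝ := fun y => t₁ * dd w₁ y + t₂ * dd (-w₂) y + t₃ * dd 0 y with hΦdef
  -- smoothness away from the three points
  have hCD : ∀ x : ℝ, x ≠ -w₂ → x ≠ 0 → x ≠ w₁ → ContDiffAt ℝ 2 ψfn x := by
    intro x h1 h2 h3
    exact ((contDiffAt_const.mul (gg_contDiffAt h3)).add
      (contDiffAt_const.mul (gg_contDiffAt h1))).add
      (contDiffAt_const.mul (gg_contDiffAt h2))
  have hΦderiv : ∀ y : ℝ, y ≠ -w₂ → y ≠ 0 → y ≠ w₁ → HasDerivAt ψfn (Φ y) y := by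
    intro y h1 h2 h3
    exact (((gg_hasDerivAt h3).const_mul t₁).add
      ((gg_hasDerivAt h1).const_mul t₂)).add
      ((gg_hasDerivAt h2).const_mul t₃)
  have hopen : IsOpen {y : ℝ | y ≠ -w₂ ∧ y ≠ 0 ∧ y ≠ w₁} := by
    have hse : {y : ℝ | y ≠ -w₂ ∧ y ≠ 0 ∧ y ≠ w₁} = ({-w₂, 0, w₁} : Set ℝ)ᶜ := by
      ext y; simp [not_or]
    rw [hse]
    exact (((Set.finite_singleton w₁).insert 0).insert (-w₂)).isClosed.isOpen_compl
  have hU : ∀ x : ℝ, x ≠ -w₂ → x ≠ 0 → x ≠ w₁ → deriv (deriv ψfn) x < 0 := by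
    intro x h1 h2 h3
    have hev : deriv ψfn =ᶠ[nhds x] Φ := by
      filter_upwards [hopen.mem_nhds ⟨h1, h2, h3⟩] with y hy
      exact (hΦderiv y hy.1 hy.2.1 hy.2.2).deriv
    rw [hev.deriv_eq]
    have hΦ' : HasDerivAt Φ
        (t₁ * (-(2:ℝ)/9 * ((x - w₁) ^ 2) ^ (-(2:ℝ)/3)) +
         t₂ * (-(2:ℝ)/9 * ((x - -w₂) ^ 2) ^ (-(2:ℝ)/3)) +
         t₃ * (-(2:ℝ)/9 * ((x - 0) ^ 2) ^ (-(2:ℝ)/3))) x :=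
      (((dd_hasDerivAt h3).const_mul t₁).add
        ((dd_hasDerivAt h1).const_mul t₂)).add
        ((dd_hasDerivAt h2).const_mul t₃)
    rw [hΦ'.deriv]
    have hA1 : (0:ℝ) < ((x - w₁) ^ 2) ^ (-(2:ℝ)/3) :=
      Real.rpow_pos_of_pos (lt_of_le_of_ne (sq_nonneg _) (Ne.symm (pow_ne_zero 2 (sub_ne_zero.2 h3)))) _
    have hA2 : (0:ℝ) < ((x - -w₂) ^ 2) ^ (-(2:ℝ)/3) :=
      Real.rpow_pos_of_pos (lt_of_le_of_ne (sq_nonneg _) (Ne.symm (pow_ne_zero 2 (sub_ne_zero.2 h1)))) _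
    have hA3 : (0:ℝ) < ((x - 0) ^ 2) ^ (-(2:ℝ)/3) :=
      Real.rpow_pos_of_pos (lt_of_le_of_ne (sq_nonneg _) (Ne.symm (pow_ne_zero 2 (sub_ne_zero.2 h2)))) _
    nlinarith
  -- continuity
  have hcont : Continuous ψfn :=
    ((continuous_const.mul (gg_continuous w₁)).add
      (continuous_const.mul (gg_continuous (-w₂)))).add
      (continuous_const.mul (gg_continuous 0))
  -- local minima at the three points
  have hmin1 : IsLocalMin ψfn w₁ := by
    have hre : ψfn = fun y => t₁ * gg w₁ y + (t₂ * gg (-w₂) y + t₃ * gg 0 y) := by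
      funext y; ring
    rw [hre]
    exact isLocalMin_aux t₁ w₁ ht₁ _
      ((contDiffAt_const.mul (gg_contDiffAt (show w₁ ≠ -w₂ by intro hh; linarith))).add
        (contDiffAt_const.mul (gg_contDiffAt hw₁.ne')))
  have hmin2 : IsLocalMin ψfn 0 := by
    have hre : ψfn = fun y => t₃ * gg 0 y + (t₁ * gg w₁ y + t₂ * gg (-w₂) y) := by
      funext y; ring
    rw [hre]
    exact isLocalMin_aux t₃ 0 ht₃ _
      ((contDiffAt_const.mul (gg_contDiffAt hw₁.ne)).add
        (contDiffAt_const.mul (gg_contDiffAt (show (0:ℝ) ≠ -w₂ by intro hh; linarith))))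
  have hmin3 : IsLocalMin ψfn (-w₂) := by
    have hre : ψfn = fun y => t₂ * gg (-w₂) y + (t₁ * gg w₁ y + t₃ * gg 0 y) := by
      funext y; ring
    rw [hre]
    exact isLocalMin_aux t₂ (-w₂) ht₂ _
      ((contDiffAt_const.mul (gg_contDiffAt (show -w₂ ≠ w₁ by intro hh; linarith))).add
        (contDiffAt_const.mul (gg_contDiffAt (show -w₂ ≠ (0:ℝ) by intro hh; linarith))))
  constructor
  · intro x
    constructor
    · intro hminx
      by_contra hn
      push_neg at hn
      obtain ⟨h1, h2, h3⟩ := hn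
      set ε : ℝ := min |x + w₂| (min |x| |x - w₁|) with hεdef
      have hxw : x + w₂ ≠ 0 := by intro hh; apply h1; linarith
      have hε : 0 < ε := lt_min (abs_pos.2 hxw) (lt_min (abs_pos.2 h2) (abs_pos.2 (sub_ne_zero.2 h3)))
      have hε1 : ε ≤ |x + w₂| := min_le_left _ _
      have hε2 : ε ≤ |x| := le_trans (min_le_right _ _) (min_le_left _ _)
      have hε3 : ε ≤ |x - w₁| := le_trans (min_le_right _ _) (min_le_right _ _)
      have hsub : Set.Ioo (x - ε) (x + ε) ⊆ {y : ℝ | y ≠ -w₂ ∧ y ≠ 0 ∧ y ≠ w₁} := by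
        rintro y ⟨hy1, hy2⟩
        refine ⟨?_, ?_, ?_⟩
        · intro hh; rw [hh] at hy1 hy2
          rcases abs_cases (x + w₂) with ⟨he, _⟩ | ⟨he, _⟩ <;> rw [he] at hε1 <;> linarith
        · intro hh; rw [hh] at hy1 hy2
          rcases abs_cases x with ⟨he, _⟩ | ⟨he, _⟩ <;> rw [he] at hε2 <;> linarith
        · intro hh; rw [hh] at hy1 hy2
          rcases abs_cases (x - w₁) with ⟨he, _⟩ | ⟨he, _⟩ <;> rw [he] at hε3 <;> linarith
      have hconc : StrictConcaveOn ℝ (Set.Ioo (x - ε) (x + ε)) ψfn := by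
        apply strictConcaveOn_of_deriv2_neg (convex_Ioo _ _) hcont.continuousOn
        intro y hy
        rw [interior_Ioo] at hy
        obtain ⟨hy1, hy2, hy3⟩ := hsub hy
        have := hU y hy1 hy2 hy3
        simpa [Function.iterate_succ, Function.iterate_one, Function.comp] using this
      exact absurd hminx (not_isLocalMin_of_strictConcaveOn hconc ⟨by linarith, by linarith⟩)
    · rintro (rfl | rfl | rfl)
      · exact hmin3
      · exact hmin2
      · exact hmin1
  · intro x h1 h2 h3
    exact ⟨hCD x h1 h2 h3, hU x h1 h2 h3⟩
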